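/- (Regularity with expander mixing) Let $G$ be a bipartite $(n,d,\lambda)$-expander and $H$ a subgraph of $G$. For any $\gamma > 0$ with $\lambda \le \gamma^2/4$, there exist $p \le 4/\gamma^2$ triples $(c_i,S_i,T_i) \in \mathbb{R} \times 2^L \times 2^R$ with $\sum_i |c_i| \le 2/\gamma$, such that for all $S \subseteq L$, $T \subseteq R$: $\big| |E_H(S,T)| - \frac{d}{n}\sum_{i=1}^p c_i |S_i \cap S| \cdot |T_i \cap T| \big| \le \gamma \cdot n d$. -/

import Mathlib

open Finset

open scoped Classical

/-- Number of edges of the (sub)graph `P` between `S` and `T`. -/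
noncomputable def eCount {L R : Type*} (P : L → R → Prop) (S : Finset L) (T : Finset R) : ℕ :=
  ((S ×ˢ T).filter fun p => P p.1 p.2).card

set_option linter.unusedSectionVars false

namespace RegAux
variable {L R : Type*} [Fintype L] [Fintype R]

noncomputable def ind (S : Finset L) (T : Finset R) (w : L × R) : ℝ :=
  if w.1 ∈ S ∧ w.2 ∈ T then 1 else 0

lemma ind_nonneg (S : Finset L) (T : Finset R) (w : L × R) : 0 ≤ ind S T w := by
  unfold ind; split <;> norm_num

lemma ind_le_one (S : Finset L) (T : Finset R) (w : L × R) : ind S T w ≤ 1 := by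
  unfold ind; split <;> norm_num

lemma ind_mul_ind (S S' : Finset L) (T T' : Finset R) (w : L × R) :
    ind S T w * ind S' T' w = ind (S ∩ S') (T ∩ T') w := by
  unfold ind
  simp only [Finset.mem_inter, ite_zero_mul_ite_zero, mul_one]
  congr 1
  rw [eq_iff_iff]
  tauto

lemma ind_sq (S : Finset L) (T : Finset R) (w : L × R) :
    ind S T w ^ 2 = ind S T w := by
  unfold ind; split <;> norm_num

noncomputable def Wg (G : L → R → Prop) : Finset (L × R) :=
  Finset.univ.filter fun w => G w.1 w.2

lemma sum_ind (G : L → R → Prop) (S : Finset L) (T : Finset R) :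
    ∑ w ∈ Wg G, ind S T w = (eCount G S T : ℝ) := by
  unfold eCount Wg ind
  rw [Finset.sum_boole]
  norm_cast
  congr 1
  ext w
  simp only [Finset.mem_filter, Finset.mem_univ, Finset.mem_product, true_and]
  tauto

lemma eCount_le (G : L → R → Prop) (S : Finset L) (T : Finset R) :
    eCount G S T ≤ (Wg G).card := by
  unfold eCount Wg
  apply Finset.card_le_card
  intro w hw
  simp only [Finset.mem_filter, Finset.mem_product] at *
  exact ⟨Finset.mem_univ _, hw.2⟩

/-- Approximating function given by a list of weighted rectangles. -/
noncomputable def fl (l : List (ℝ × Finset L × Finset R)) (w : L × R) : ℝ :=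
  (l.map fun t => t.1 * ind t.2.1 t.2.2 w).sum

noncomputable def gf (H : L → R → Prop) (l : List (ℝ × Finset L × Finset R)) (w : L × R) : ℝ :=
  (if H w.1 w.2 then 1 else 0) - fl l w

noncomputable def En (G H : L → R → Prop) (l : List (ℝ × Finset L × Finset R)) : ℝ :=
  ∑ w ∈ Wg G, (gf H l w) ^ 2

noncomputable def errf (G H : L → R → Prop) (l : List (ℝ × Finset L × Finset R))
    (S : Finset L) (T : Finset R) : ℝ :=
  ∑ w ∈ Wg G, gf H l w * ind S T w

noncomputable def csum (l : List (ℝ × Finset L × Finset R)) : ℝ :=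
  (l.map fun t => |t.1|).sum

lemma gf_cons (H : L → R → Prop) (c : ℝ) (S : Finset L) (T : Finset R)
    (l : List (ℝ × Finset L × Finset R)) (w : L × R) :
    gf H ((c, S, T) :: l) w = gf H l w - c * ind S T w := by
  simp [gf, fl]; ring

lemma En_nonneg (G H : L → R → Prop) (l : List (ℝ × Finset L × Finset R)) :
    0 ≤ En G H l :=
  Finset.sum_nonneg fun w _ => sq_nonneg _

lemma En_nil_le (G H : L → R → Prop) (hsub : ∀ ℓ r, H ℓ r → G ℓ r) :
    En G H [] ≤ (Wg G).card := by
  unfold En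
  calc ∑ w ∈ Wg G, (gf H [] w) ^ 2 ≤ ∑ w ∈ Wg G, 1 := by
        apply Finset.sum_le_sum
        intro w _
        simp only [gf, fl, List.map_nil, List.sum_nil, sub_zero]
        split <;> norm_num
    _ = (Wg G).card := by simp

lemma errf_nil (G H : L → R → Prop) (hsub : ∀ ℓ r, H ℓ r → G ℓ r)
    (S : Finset L) (T : Finset R) :
    errf G H [] S T = (eCount H S T : ℝ) := by
  unfold errf gf fl ind Wg eCount
  simp only [List.map_nil, List.sum_nil, sub_zero, ite_zero_mul_ite_zero, mul_one]
  rw [Finset.sum_boole]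
  norm_cast
  congr 1
  ext w
  simp only [Finset.mem_filter, Finset.mem_univ, Finset.mem_product, true_and]
  constructor
  · rintro ⟨-, hH, hm⟩; exact ⟨hm, hH⟩
  · rintro ⟨hm, hH⟩; exact ⟨hsub _ _ hH, hH, hm⟩

lemma errf_cons (G H : L → R → Prop) (c : ℝ) (S T' : _) (l : List (ℝ × Finset L × Finset R))
    (S' : Finset L) (T : Finset R) :
    errf G H ((c, S, T') :: (l : List (ℝ × Finset L × Finset R))) S' T =
      errf G H l S' T - c * (eCount G (S ∩ S') (T' ∩ T) : ℝ) := by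
  unfold errf
  rw [← sum_ind G (S ∩ S') (T' ∩ T), Finset.mul_sum, ← Finset.sum_sub_distrib]
  apply Finset.sum_congr rfl
  intro w _
  rw [gf_cons, ← ind_mul_ind]
  ring

lemma En_cons (G H : L → R → Prop) (c : ℝ) (S : Finset L) (T : Finset R)
    (l : List (ℝ × Finset L × Finset R)) :
    En G H ((c, S, T) :: l) =
      En G H l - 2 * c * errf G H l S T + c ^ 2 * (eCount G S T : ℝ) := by
  unfold En errf
  rw [← sum_ind G S T, Finset.mul_sum, Finset.mul_sum, ← Finset.sum_sub_distrib,
    ← Finset.sum_add_distrib]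
  apply Finset.sum_congr rfl
  intro w _
  rw [gf_cons]
  linear_combination c ^ 2 * ind_sq S T w

end RegAux

namespace RegAux2
open RegAux
variable {L R : Type*} [Fintype L] [Fintype R]

lemma eCount_pos (G H : L → R → Prop) (l : List (ℝ × Finset L × Finset R))
    (S : Finset L) (T : Finset R) (h : errf G H l S T ≠ 0) :
    0 < (eCount G S T : ℝ) := by
  rcases (Nat.eq_zero_or_pos (eCount G S T)) with h0 | h0
  · exfalso
    apply h
    have hz : ∑ w ∈ Wg G, ind S T w = 0 := by rw [sum_ind, h0]; norm_num
    have : ∀ w ∈ Wg G, ind S T w = 0 :=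
      (Finset.sum_eq_zero_iff_of_nonneg fun w _ => ind_nonneg S T w).mp hz
    unfold errf
    apply Finset.sum_eq_zero
    intro w hw
    rw [this w hw, mul_zero]
  · exact_mod_cast h0

lemma main_ind (G H : L → R → Prop) (hsub : ∀ ℓ r, H ℓ r → G ℓ r)
    (ε : ℝ) (hε : 0 < ε) (k : ℕ) :
    (∃ l : List (ℝ × Finset L × Finset R),
        En G H l ≤ ((Wg G).card : ℝ) * (1 - l.length * ε ^ 2) ∧
        ε * ((Wg G).card : ℝ) * csum l ≤ ((Wg G).card : ℝ) - En G H l ∧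
        ∀ S T, |errf G H l S T| ≤ ε * ((Wg G).card : ℝ)) ∨
    (∃ l : List (ℝ × Finset L × Finset R), l.length = k ∧
        En G H l ≤ ((Wg G).card : ℝ) * (1 - k * ε ^ 2) ∧
        ε * ((Wg G).card : ℝ) * csum l ≤ ((Wg G).card : ℝ) - En G H l) := by
  set N : ℝ := ((Wg G).card : ℝ) with hNdef
  have hN0 : 0 ≤ N := Nat.cast_nonneg _
  induction k with
  | zero =>
    right
    refine ⟨[], rfl, by simpa using En_nil_le G H hsub, ?_⟩
    have hc0 : csum ([] : List (ℝ × Finset L × Finset R)) = 0 := by simp [csum]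
    rw [hc0, mul_zero, sub_nonneg]
    simpa using En_nil_le G H hsub
  | succ k ih =>
    rcases ih with h | ⟨l, hlen, hEn, hcs⟩
    · exact Or.inl h
    by_cases hgood : ∀ S T, |errf G H l S T| ≤ ε * N
    · left
      refine ⟨l, ?_, hcs, hgood⟩
      rw [hlen]
      exact hEn
    · right
      push_neg at hgood
      obtain ⟨S, T, hST⟩ := hgood
      set δ : ℝ := errf G H l S T with hδdef
      set e : ℝ := (eCount G S T : ℝ) with hedef
      have hδ0 : δ ≠ 0 := by
        intro h0
        rw [h0] at hST
        simp only [abs_zero] at hST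
        nlinarith
      have he0 : 0 < e := eCount_pos G H l S T hδ0
      have heN : e ≤ N := by
        rw [hedef, hNdef]
        exact_mod_cast eCount_le G S T
      have hNpos : 0 < N := lt_of_lt_of_le he0 heN
      set c : ℝ := δ / e with hcdef
      have hEc : En G H ((c, S, T) :: l) = En G H l - δ ^ 2 / e := by
        rw [En_cons, ← hδdef, ← hedef, hcdef]
        field_simp
        ring
      have hdrop : ε ^ 2 * N ≤ δ ^ 2 / e := by
        rw [le_div_iff₀ he0]
        have h1 : (ε * N) ^ 2 < |δ| ^ 2 :=
          pow_lt_pow_left₀ hST (by positivity) (by norm_num)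
        nlinarith [sq_abs δ,
          mul_nonneg (mul_nonneg (sq_nonneg ε) hN0) (sub_nonneg.mpr heN)]
      have habs : ε * N * |c| ≤ δ ^ 2 / e := by
        have h2 : |c| = |δ| / e := by rw [hcdef, abs_div, abs_of_pos he0]
        rw [h2, ← mul_div_assoc, div_le_div_iff₀ he0 he0]
        nlinarith [sq_abs δ,
          mul_nonneg (mul_nonneg (sub_nonneg.mpr hST.le) (abs_nonneg δ)) he0.le]
      refine ⟨(c, S, T) :: l, by simp [hlen], ?_, ?_⟩
      · rw [hEc]
        push_cast
        nlinarith [hdrop, hEn]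
      · have hcsc : csum ((c, S, T) :: l) = |c| + csum l := by simp [csum]
        rw [hEc, hcsc]
        nlinarith

lemma errf_eq (G H : L → R → Prop) (hsub : ∀ ℓ r, H ℓ r → G ℓ r)
    (l : List (ℝ × Finset L × Finset R)) (S : Finset L) (T : Finset R) :
    errf G H l S T = (eCount H S T : ℝ) -
      (l.map fun t => t.1 * (eCount G (t.2.1 ∩ S) (t.2.2 ∩ T) : ℝ)).sum := by
  induction l with
  | nil => simp [errf_nil G H hsub]
  | cons t l ih =>
    obtain ⟨c, S', T'⟩ := t
    rw [errf_cons, ih]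
    simp only [List.map_cons, List.sum_cons]
    ring

lemma card_fiber (G : L → R → Prop) (ℓ : L) :
    eCount G {ℓ} Finset.univ = (Finset.univ.filter fun r => G ℓ r).card := by
  unfold eCount
  rw [Finset.singleton_product, Finset.filter_map, Finset.card_map]
  rfl

lemma card_Wg (G : L → R → Prop) (d : ℕ)
    (hdegL : ∀ ℓ : L, eCount G {ℓ} Finset.univ = d) :
    (Wg G).card = Fintype.card L * d := by
  unfold Wg
  rw [Finset.card_filter, ← Finset.univ_product_univ, Finset.sum_product]
  have h : ∀ ℓ : L, (∑ r : R, if G ℓ r then 1 else 0) = d := by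
    intro ℓ
    rw [← hdegL ℓ, card_fiber, Finset.card_filter]
  rw [Finset.sum_congr rfl fun ℓ _ => h ℓ, Finset.sum_const, smul_eq_mul,
    Finset.card_univ]

end RegAux2


set_option maxHeartbeats 1600000 in
/-- Weak regularity for subgraphs of an expander, combined with the expander mixing lemma:
if `G` is an `(n,d,λ)`-expander (i.e. a `d`-regular bipartite graph with parts of size `n`
satisfying the mixing bound) and `H` is a subgraph of `G`, then for any `γ > 0` with
`λ ≤ γ²/4`, there exist `p ≤ 4/γ²` triples `(cᵢ, Sᵢ, Tᵢ)` with `∑ᵢ |cᵢ| ≤ 2/γ` such that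
for all `S ⊆ L`, `T ⊆ R`,
`| |E_H(S,T)| - (d/n) ∑ᵢ cᵢ |Sᵢ ∩ S|·|Tᵢ ∩ T| | ≤ γ n d`. -/
theorem regularity_with_expander_mixing {L R : Type*} [Fintype L] [Fintype R]
    (n d : ℕ) (hL : Fintype.card L = n) (hR : Fintype.card R = n)
    (G H : L → R → Prop) (hsub : ∀ ℓ r, H ℓ r → G ℓ r)
    (hdegL : ∀ ℓ : L, eCount G {ℓ} Finset.univ = d)
    (hdegR : ∀ r : R, eCount G Finset.univ {r} = d)
    (lam γ : ℝ) (hγ : 0 < γ) (hlam0 : 0 ≤ lam) (hlam : lam ≤ γ ^ 2 / 4)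
    (hEML : ∀ (S : Finset L) (T : Finset R),
      |(eCount G S T : ℝ) - ((d : ℝ) / n) * S.card * T.card| ≤ lam * d * n) :
    ∃ (p : ℕ) (c : Fin p → ℝ) (Sc : Fin p → Finset L) (Tc : Fin p → Finset R),
      (p : ℝ) ≤ 4 / γ ^ 2 ∧
      (∑ i, |c i|) ≤ 2 / γ ∧
      ∀ (S : Finset L) (T : Finset R),
        |(eCount H S T : ℝ) -
            ((d : ℝ) / n) * ∑ i, c i * ((Sc i ∩ S).card : ℝ) * ((Tc i ∩ T).card : ℝ)| ≤
          γ * n * d := by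
  
  classical
  have hNnd : (((RegAux.Wg G).card : ℕ) : ℝ) = (n : ℝ) * d := by
    rw [RegAux2.card_Wg G d hdegL, hL]
    push_cast
    ring
  by_cases hW0 : (RegAux.Wg G).card = 0
  · -- degenerate case: no edges at all
    refine ⟨0, Fin.elim0, Fin.elim0, Fin.elim0,
      by simpa using div_nonneg (by norm_num : (0:ℝ) ≤ 4) (sq_nonneg γ), ?_, ?_⟩
    · simp only [Finset.univ_eq_empty, Finset.sum_empty]
      exact div_nonneg (by norm_num) hγ.le
    intro S T
    have hWempty : RegAux.Wg G = ∅ := Finset.card_eq_zero.mp hW0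
    have hH0 : eCount H S T = 0 := by
      unfold eCount
      rw [Finset.card_eq_zero]
      ext w
      simp only [Finset.mem_filter, Finset.mem_product, Finset.notMem_empty, iff_false]
      rintro ⟨-, hHw⟩
      have hmem : w ∈ RegAux.Wg G := by
        unfold RegAux.Wg
        simp [hsub _ _ hHw]
      rw [hWempty] at hmem
      exact absurd hmem (Finset.notMem_empty w)
    have hnd : (n : ℝ) * d = 0 := by rw [← hNnd, hW0]; norm_num
    rw [hH0]
    simp only [Finset.univ_eq_empty, Finset.sum_empty, mul_zero, Nat.cast_zero, sub_zero,
      abs_zero]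
    nlinarith
  have hNpos : (0 : ℝ) < ((RegAux.Wg G).card : ℝ) := by
    exact_mod_cast Nat.pos_of_ne_zero hW0
  have hε : (0 : ℝ) < γ / 2 := by positivity
  set k : ℕ := ⌊4 / γ ^ 2⌋₊ + 1 with hkdef
  have hfloor : (4 / γ ^ 2 : ℝ) < (k : ℝ) := by
    rw [hkdef]
    push_cast
    exact Nat.lt_floor_add_one _
  rcases RegAux2.main_ind G H hsub (γ / 2) hε k with
    ⟨l, hEn, hcs, herr⟩ | ⟨l, hlen, hEn, hcs⟩
  · -- good approximant found
    have hEn0 := RegAux.En_nonneg G H l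
    refine ⟨l.length, fun i => (l.get i).1, fun i => (l.get i).2.1, fun i => (l.get i).2.2,
      ?_, ?_, ?_⟩
    · rw [le_div_iff₀ (by positivity : (0:ℝ) < γ ^ 2)]
      nlinarith [hEn, hEn0, hNpos]
    · have hsum : (∑ i : Fin l.length, |(l.get i).1|) = RegAux.csum l := by
        simp only [List.get_eq_getElem, RegAux.csum]
        exact Fin.sum_univ_fun_getElem l fun t => |t.1|
      rw [hsum, le_div_iff₀ hγ]
      nlinarith [hcs, hEn0, hNpos]
    · intro S T
      have hM : (∑ i : Fin l.length,
            (l.get i).1 * (eCount G ((l.get i).2.1 ∩ S) ((l.get i).2.2 ∩ T) : ℝ))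
          = (l.map fun t => t.1 * (eCount G (t.2.1 ∩ S) (t.2.2 ∩ T) : ℝ)).sum := by
        simp only [List.get_eq_getElem]
        exact Fin.sum_univ_fun_getElem l fun t => t.1 * (eCount G (t.2.1 ∩ S) (t.2.2 ∩ T) : ℝ)
      have herrf : RegAux.errf G H l S T = (eCount H S T : ℝ) -
          ∑ i : Fin l.length,
            (l.get i).1 * (eCount G ((l.get i).2.1 ∩ S) ((l.get i).2.2 ∩ T) : ℝ) := by
        rw [RegAux2.errf_eq G H hsub l S T, hM]
      have hsplit : (∑ i : Fin l.length, (l.get i).1 *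
            ((eCount G ((l.get i).2.1 ∩ S) ((l.get i).2.2 ∩ T) : ℝ) -
              ((d : ℝ) / n) * (((l.get i).2.1 ∩ S).card : ℝ) * (((l.get i).2.2 ∩ T).card : ℝ)))
          = (∑ i : Fin l.length,
              (l.get i).1 * (eCount G ((l.get i).2.1 ∩ S) ((l.get i).2.2 ∩ T) : ℝ)) -
            ((d : ℝ) / n) * ∑ i : Fin l.length,
              (l.get i).1 * (((l.get i).2.1 ∩ S).card : ℝ) * (((l.get i).2.2 ∩ T).card : ℝ) := by
        rw [Finset.mul_sum, ← Finset.sum_sub_distrib]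
        apply Finset.sum_congr rfl
        intro i _
        ring
      have hkey : (eCount H S T : ℝ) -
            ((d : ℝ) / n) * ∑ i : Fin l.length,
              (l.get i).1 * (((l.get i).2.1 ∩ S).card : ℝ) * (((l.get i).2.2 ∩ T).card : ℝ)
          = RegAux.errf G H l S T + ∑ i : Fin l.length, (l.get i).1 *
              ((eCount G ((l.get i).2.1 ∩ S) ((l.get i).2.2 ∩ T) : ℝ) -
                ((d : ℝ) / n) * (((l.get i).2.1 ∩ S).card : ℝ) *
                  (((l.get i).2.2 ∩ T).card : ℝ)) := by
        rw [herrf, hsplit]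
        ring
      have habs1 : |RegAux.errf G H l S T| ≤ γ / 2 * ((n : ℝ) * d) := by
        rw [← hNnd]
        exact herr S T
      have hcsum_le : RegAux.csum l ≤ 2 / γ := by
        rw [le_div_iff₀ hγ]
        nlinarith [hcs, hEn0, hNpos]
      have hcsum_nonneg : 0 ≤ RegAux.csum l := by
        unfold RegAux.csum
        apply List.sum_nonneg
        intro x hx
        simp only [List.mem_map] at hx
        obtain ⟨t, -, rfl⟩ := hx
        exact abs_nonneg _
      have habs2 : |∑ i : Fin l.length, (l.get i).1 *
            ((eCount G ((l.get i).2.1 ∩ S) ((l.get i).2.2 ∩ T) : ℝ) -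
              ((d : ℝ) / n) * (((l.get i).2.1 ∩ S).card : ℝ) *
                (((l.get i).2.2 ∩ T).card : ℝ))|
          ≤ RegAux.csum l * (lam * d * n) := by
        calc _ ≤ ∑ i : Fin l.length, |(l.get i).1 *
              ((eCount G ((l.get i).2.1 ∩ S) ((l.get i).2.2 ∩ T) : ℝ) -
                ((d : ℝ) / n) * (((l.get i).2.1 ∩ S).card : ℝ) *
                  (((l.get i).2.2 ∩ T).card : ℝ))| := Finset.abs_sum_le_sum_abs _ _
          _ ≤ ∑ i : Fin l.length, |(l.get i).1| * (lam * d * n) := by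
              apply Finset.sum_le_sum
              intro i _
              rw [abs_mul]
              exact mul_le_mul_of_nonneg_left (hEML _ _) (abs_nonneg _)
          _ = (∑ i : Fin l.length, |(l.get i).1|) * (lam * d * n) := by
              rw [Finset.sum_mul]
          _ = RegAux.csum l * (lam * d * n) := by
              congr 1
              simp only [List.get_eq_getElem, RegAux.csum]
              exact Fin.sum_univ_fun_getElem l fun t => |t.1|
      have hlamdn : (0:ℝ) ≤ lam * d * n := by positivity
      have h2 : RegAux.csum l * (lam * d * n) ≤ (2 / γ) * ((γ ^ 2 / 4) * d * n) := by
        apply mul_le_mul hcsum_le _ hlamdn (by positivity)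
        have hdn : (0:ℝ) ≤ (d : ℝ) * n := by positivity
        nlinarith
      have h3 : (2 / γ) * ((γ ^ 2 / 4) * (d:ℝ) * n) = (γ / 2) * ((d:ℝ) * n) := by
        field_simp
        ring
      rw [hkey]
      refine le_trans (abs_add_le _ _) ?_
      rw [h3] at h2
      linarith
  · -- the "still running" branch is impossible at this fuel
    exfalso
    have h1 : (0:ℝ) ≤ ((RegAux.Wg G).card : ℝ) * (1 - (k : ℝ) * (γ / 2) ^ 2) :=
      le_trans (RegAux.En_nonneg G H l) hEn
    have h3 : (0:ℝ) ≤ 1 - (k : ℝ) * (γ / 2) ^ 2 := by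
      by_contra hcon
      push_neg at hcon
      nlinarith [mul_pos hNpos (by linarith : (0:ℝ) < (k : ℝ) * (γ / 2) ^ 2 - 1), h1]
    have h2 : (k : ℝ) ≤ 4 / γ ^ 2 := by
      rw [le_div_iff₀ (by positivity : (0:ℝ) < γ ^ 2)]
      nlinarith [h3]
    linarith
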